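/- Let A and B be 2×4 complex matrices with 2×2 minors [ij] (for A) and ⟨ij⟩ (for B) as above. Assume [13][24] ≠ 0 and ⟨13⟩⟨24⟩ ≠ 0. Then the Segre determinant Seg_{2,2}(A,B) vanishes if and only if the cross-ratios of the two column configurations agree: [12][34] / ([13][24]) = ⟨12⟩⟨34⟩ / (⟨13⟩⟨24⟩). -/

import Mathlib

/-- The Segre matrix of `A` and `B`: rows indexed by `(i,j) ∈ [k] × [ℓ]` via `(i,j) ↦ i*ℓ + j`,
columns by `m ∈ [n]`, entry `A i m * B j m`. -/
noncomputable def segreMatrix (k ℓ : ℕ) (A : Matrix (Fin k) (Fin (k * ℓ)) ℂ)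
    (B : Matrix (Fin ℓ) (Fin (k * ℓ)) ℂ) : Matrix (Fin (k * ℓ)) (Fin (k * ℓ)) ℂ :=
  Matrix.of fun r m =>
    A (finProdFinEquiv.symm r).1 m * B (finProdFinEquiv.symm r).2 m

/-- The Segre determinant `Seg_{k,ℓ}(A, B)`. -/
noncomputable def segreDet (k ℓ : ℕ) (A : Matrix (Fin k) (Fin (k * ℓ)) ℂ)
    (B : Matrix (Fin ℓ) (Fin (k * ℓ)) ℂ) : ℂ :=
  (segreMatrix k ℓ A B).det


/-- The `2 × 2` minor of a `2 × n` matrix `M` on columns `i, j`. -/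
noncomputable def minor2 {n : ℕ} (M : Matrix (Fin 2) (Fin n) ℂ) (i j : Fin n) : ℂ :=
  M 0 i * M 1 j - M 0 j * M 1 i

/-- **`Seg_{2,2}` vanishes iff the cross-ratios agree.**  Assume `[13][24] ≠ 0` and
`⟨13⟩⟨24⟩ ≠ 0` (paper's columns `1,2,3,4` are `0,1,2,3` here).  Then `Seg_{2,2}(A,B) = 0`
iff `[12][34]/([13][24]) = ⟨12⟩⟨34⟩/(⟨13⟩⟨24⟩)`. -/
theorem segreDet_two_two_eq_zero_iff_crossRatio (A B : Matrix (Fin 2) (Fin 4) ℂ)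
    (hA : minor2 A 0 2 * minor2 A 1 3 ≠ 0) (hB : minor2 B 0 2 * minor2 B 1 3 ≠ 0) :
    segreDet 2 2 A B = 0 ↔
      minor2 A 0 1 * minor2 A 2 3 / (minor2 A 0 2 * minor2 A 1 3)
        = minor2 B 0 1 * minor2 B 2 3 / (minor2 B 0 2 * minor2 B 1 3) := by
  have key : segreDet 2 2 A B
      = minor2 A 0 2 * minor2 A 1 3 * (minor2 B 0 1 * minor2 B 2 3)
        - minor2 A 0 1 * minor2 A 2 3 * (minor2 B 0 2 * minor2 B 1 3) := by
    have hM : segreMatrix 2 2 A B =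
        !![A 0 0 * B 0 0, A 0 1 * B 0 1, A 0 2 * B 0 2, A 0 3 * B 0 3;
           A 0 0 * B 1 0, A 0 1 * B 1 1, A 0 2 * B 1 2, A 0 3 * B 1 3;
           A 1 0 * B 0 0, A 1 1 * B 0 1, A 1 2 * B 0 2, A 1 3 * B 0 3;
           A 1 0 * B 1 0, A 1 1 * B 1 1, A 1 2 * B 1 2, A 1 3 * B 1 3] := by
      ext r m
      fin_cases r <;> fin_cases m <;> rfl
    rw [segreDet, hM]
    simp [Matrix.det_succ_row_zero, Fin.sum_univ_succ, minor2, Fin.succAbove,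
      Fin.castSucc, Fin.castAdd, Fin.castLE]
    ring
  rw [key, sub_eq_zero, div_eq_div_iff hA hB]
  constructor
  · intro h; linear_combination -h
  · intro h; linear_combination -h
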